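/- Let A be a P×M complex matrix with ordered column rank K > 0 and A = QR a QR decomposition. Then for every k with 1 ≤ k ≤ K, the column span of the first k columns of Q equals the column span of the first k columns of A. -/

import Mathlib

open Matrix

/-- Generalized QR decomposition: `A = Q * R`, the nonzero columns of `Q` are
orthonormal, `R` is upper triangular with real nonnegative diagonal, and `R = Qᴴ * A`. -/
def IsQR {P M : ℕ} (A Q : Matrix (Fin P) (Fin M) ℂ)
    (R : Matrix (Fin M) (Fin M) ℂ) : Prop :=
  A = Q * R ∧
  (∀ i j : Fin M, (fun p => Q p i) ≠ 0 → (fun p => Q p j) ≠ 0 →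
      (Qᴴ * Q) i j = if i = j then 1 else 0) ∧
  (∀ i j : Fin M, j < i → R i j = 0) ∧
  (∀ i : Fin M, (R i i).im = 0 ∧ 0 ≤ (R i i).re) ∧
  R = Qᴴ * A

/-- Rank of the matrix formed by the first `k` columns of `A` (for `k ≤ M`). -/
noncomputable def firstColsRank {P M : ℕ} (A : Matrix (Fin P) (Fin M) ℂ) (k : ℕ) : ℕ :=
  (Matrix.of fun (p : Fin P) (j : Fin (min k M)) =>
    A p (Fin.castLE (min_le_right k M) j)).rank

/-- `K` is the ordered column rank of `A`: the largest `k` such that the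
first `k` columns of `A` have rank `k`. -/
def OrderedColRank {P M : ℕ} (A : Matrix (Fin P) (Fin M) ℂ) (K : ℕ) : Prop :=
  K ≤ M ∧ firstColsRank A K = K ∧ ∀ k, K < k → k ≤ M → firstColsRank A k ≠ k

theorem qr_span_first_k_columns {P M K : ℕ}
    (A Q : Matrix (Fin P) (Fin M) ℂ) (R : Matrix (Fin M) (Fin M) ℂ)
    (hK : OrderedColRank A K) (hKpos : 0 < K) (hKM : K ≤ M)
    (hQR : IsQR A Q R) :
    ∀ k : ℕ, 1 ≤ k → ∀ hk : k ≤ K,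
      Submodule.span ℂ (Set.range fun i : Fin k => fun p : Fin P =>
          Q p (Fin.castLE (le_trans hk hKM) i)) =
      Submodule.span ℂ (Set.range fun i : Fin k => fun p : Fin P =>
          A p (Fin.castLE (le_trans hk hKM) i)) := by
  obtain ⟨hA, -, hRtri, -, -⟩ := hQR
  intro k hk1 hk
  have hkM : k ≤ M := hk.trans hKM
  set qcols : Fin k → (Fin P → ℂ) :=
    fun i => fun p => Q p (Fin.castLE (le_trans hk hKM) i) with hq
  set acols : Fin k → (Fin P → ℂ) :=
    fun i => fun p => A p (Fin.castLE (le_trans hk hKM) i) with ha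
  -- span of A-columns is contained in span of Q-columns
  have hle : Submodule.span ℂ (Set.range acols) ≤ Submodule.span ℂ (Set.range qcols) := by
    rw [Submodule.span_le]
    rintro _ ⟨j, rfl⟩
    have hsum : acols j = ∑ i : Fin M, R i (Fin.castLE hkM j) • (fun p => Q p i) := by
      funext p
      simp only [ha, hA, Matrix.mul_apply, Finset.sum_apply, Pi.smul_apply, smul_eq_mul,
        mul_comm]
    rw [hsum]
    refine Submodule.sum_mem _ fun i _ => ?_
    by_cases hi : (i : ℕ) < k
    · refine Submodule.smul_mem _ _ (Submodule.subset_span ⟨⟨(i : ℕ), hi⟩, ?_⟩)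
      simp only [hq]
      congr 1
    · have hz : R i (Fin.castLE hkM j) = 0 := by
        refine hRtri _ _ ?_
        have : (j : ℕ) < k := j.isLt
        exact Fin.lt_def.mpr (lt_of_lt_of_le this (le_of_not_gt hi))
      rw [hz, zero_smul]
      exact Submodule.zero_mem _
  -- the first K columns of A are linearly independent
  have hminK : min K M = K := min_eq_left hKM
  have hrank := hK.2.1
  unfold firstColsRank at hrank
  have hli : LinearIndependent ℂ
      (fun j : Fin (min K M) => fun p : Fin P => A p (Fin.castLE (min_le_right K M) j)) := by
    rw [linearIndependent_iff_card_eq_finrank_span, Fintype.card_fin]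
    have h2 : Module.finrank ℂ (Submodule.span ℂ (Set.range
        (Matrix.of fun (p : Fin P) (j : Fin (min K M)) =>
          A p (Fin.castLE (min_le_right K M) j))ᵀ)) = K := by
      exact (Matrix.rank_eq_finrank_span_cols _).symm.trans hrank
    exact hminK.trans h2.symm
  -- hence the first k columns of A are linearly independent
  have hkmin : k ≤ min K M := le_min hk hkM
  have hli' : LinearIndependent ℂ acols := by
    have := hli.comp (Fin.castLE hkmin) (Fin.castLE_injective hkmin)
    convert this using 2 with i
    rfl
  have hdimA : Module.finrank ℂ (Submodule.span ℂ (Set.range acols)) = k := by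
    rw [finrank_span_eq_card hli', Fintype.card_fin]
  have hdimQ : Module.finrank ℂ (Submodule.span ℂ (Set.range qcols)) ≤ k := by
    simpa [Set.finrank] using finrank_range_le_card qcols
  exact (Submodule.eq_of_le_of_finrank_le hle (by rw [hdimA]; exact hdimQ)).symm
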